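/- Let m be a positive integer, k ≥ 2, and b, c integer sequences. Suppose there exists a positive integer u such that m divides each of b_u, b_{u+1}, ..., b_{u+k-1}. Then the sequence of k-dimensional semisymmetric weighted Catalan numbers modulo m (indexed by n ≥ 0) is eventually periodic. -/

import Mathlib

open scoped Classical

/-- Number of steps among the first `i` steps of `P` equal to basis vector `j`. -/
def cnt (k n : ℕ) (P : Fin (k*n) → Fin k) (j : Fin k) (i : ℕ) : ℕ :=
  (Finset.univ.filter (fun t : Fin (k*n) => (t : ℕ) < i ∧ P t = j)).card

/-- `P` is a `k`-dimensional balanced ballot path of length `k*n`: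
each basis vector appears exactly `n` times, and every partial sum is
weakly decreasing in coordinates. -/
def IsBBP (k n : ℕ) (P : Fin (k*n) → Fin k) : Prop :=
  (∀ j : Fin k, cnt k n P j (k*n) = n) ∧
  (∀ i ≤ k*n, ∀ j j' : Fin k, j ≤ j' → cnt k n P j' i ≤ cnt k n P j i)

/-- Semisymmetric height `g_k` of the `i`-th intermediate point of `P`. -/
def ptHt (k n : ℕ) (P : Fin (k*n) → Fin k) (i : ℕ) : ℤ :=
  ∑ j : Fin k, ((k : ℤ) - 1 - 2*(j : ℕ)) * (cnt k n P j i)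

/-- The semisymmetric height of path `P` is at most `u`. -/
def HeightLE (k n : ℕ) (P : Fin (k*n) → Fin k) (u : ℤ) : Prop :=
  ∀ i ≤ k*n, ptHt k n P i ≤ u

/-- The semisymmetric height of path `P` is exactly `u`. -/
def HeightEq (k n : ℕ) (P : Fin (k*n) → Fin k) (u : ℤ) : Prop :=
  HeightLE k n P u ∧ ∃ i ≤ k*n, ptHt k n P i = u

/-- Semisymmetric weight of a path w.r.t. `(b, c)`: product of `b` at the
height of the starting point over up-steps (indices `< k/2`), times the
product of `c` at the height of the resulting point over the other steps. -/
noncomputable def sswt (k n : ℕ) (b c : ℕ → ℤ) (P : Fin (k*n) → Fin k) : ℤ :=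
  ∏ t : Fin (k*n),
    if (P t : ℕ) < k/2 then b (ptHt k n P (t : ℕ)).toNat
    else c (ptHt k n P ((t : ℕ)+1)).toNat

/-- The `n`th `k`-dimensional semisymmetric weighted Catalan number. -/
noncomputable def SSWCN (k : ℕ) (b c : ℕ → ℤ) (n : ℕ) : ℤ :=
  ∑ P : Fin (k*n) → Fin k, if IsBBP k n P then sswt k n b c P else 0


namespace SS14

variable (k : ℕ)

/-- generic prefix count -/
def pcnt {L : ℕ} (Q : Fin L → Fin k) (j : Fin k) (i : ℕ) : ℕ :=
  (Finset.univ.filter (fun t : Fin L => (t : ℕ) < i ∧ Q t = j)).card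

def pHt {L : ℕ} (Q : Fin L → Fin k) (i : ℕ) : ℤ :=
  ∑ j : Fin k, ((k : ℤ) - 1 - 2*(j : ℕ)) * (pcnt k Q j i)

lemma pcnt_zero {L : ℕ} (Q : Fin L → Fin k) (j : Fin k) : pcnt k Q j 0 = 0 := by
  simp [pcnt]

lemma pcnt_succ {L : ℕ} (Q : Fin L → Fin k) (j : Fin k) (i : ℕ) :
    pcnt k Q j (i+1) = pcnt k Q j i +
      (if h : i < L then (if Q ⟨i, h⟩ = j then 1 else 0) else 0) := by
  unfold pcnt
  by_cases h : i < L
  · by_cases hq : Q ⟨i, h⟩ = j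
    · rw [dif_pos h, if_pos hq]
      have hset : (Finset.univ.filter (fun t : Fin L => (t:ℕ) < i+1 ∧ Q t = j)) =
          insert ⟨i,h⟩ (Finset.univ.filter (fun t : Fin L => (t:ℕ) < i ∧ Q t = j)) := by
        ext t
        simp only [Finset.mem_filter, Finset.mem_insert, Finset.mem_univ, true_and]
        constructor
        · rintro ⟨ht, hq'⟩
          rcases Nat.lt_succ_iff_lt_or_eq.mp ht with h1 | h1
          · exact Or.inr ⟨h1, hq'⟩
          · exact Or.inl (Fin.ext h1)
        · rintro (rfl | ⟨h1, h2⟩)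
          · exact ⟨Nat.lt_succ_self _, hq⟩
          · exact ⟨Nat.lt_succ_of_lt h1, h2⟩
      rw [hset, Finset.card_insert_of_notMem (by simp)]
    · rw [dif_pos h, if_neg hq]
      have hset : (Finset.univ.filter (fun t : Fin L => (t:ℕ) < i+1 ∧ Q t = j)) =
          (Finset.univ.filter (fun t : Fin L => (t:ℕ) < i ∧ Q t = j)) := by
        ext t
        simp only [Finset.mem_filter, Finset.mem_univ, true_and]
        constructor
        · rintro ⟨ht, hq'⟩
          rcases Nat.lt_succ_iff_lt_or_eq.mp ht with h1 | h1
          · exact ⟨h1, hq'⟩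
          · exact absurd hq' (by rw [show t = ⟨i,h⟩ from Fin.ext h1]; exact hq)
        · rintro ⟨h1, h2⟩; exact ⟨Nat.lt_succ_of_lt h1, h2⟩
      rw [hset]; omega
  · rw [dif_neg h]
    have hset : (Finset.univ.filter (fun t : Fin L => (t:ℕ) < i+1 ∧ Q t = j)) =
        (Finset.univ.filter (fun t : Fin L => (t:ℕ) < i ∧ Q t = j)) := by
      ext t
      have := t.isLt
      simp only [Finset.mem_filter, Finset.mem_univ, true_and]
      constructor
      · rintro ⟨ht, hq'⟩; exact ⟨by omega, hq'⟩
      · rintro ⟨h1, h2⟩; exact ⟨by omega, h2⟩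
    rw [hset]; omega

lemma pcnt_snoc_of_le {s : ℕ} (Q : Fin s → Fin k) (j j' : Fin k) :
    ∀ i ≤ s, pcnt k (Fin.snoc Q j) j' i = pcnt k Q j' i := by
  intro i
  induction i with
  | zero => intro _; rw [pcnt_zero, pcnt_zero]
  | succ i ih =>
    intro hi
    have hi' : i ≤ s := Nat.le_of_succ_le hi
    have hiL : i < s := hi
    rw [pcnt_succ, pcnt_succ, ih hi']
    congr 1
    rw [dif_pos (Nat.lt_succ_of_lt hiL), dif_pos hiL]
    have : (Fin.snoc Q j : Fin (s+1) → Fin k) ⟨i, Nat.lt_succ_of_lt hiL⟩ = Q ⟨i, hiL⟩ := by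
      have h2 : (⟨i, Nat.lt_succ_of_lt hiL⟩ : Fin (s+1)) = Fin.castSucc ⟨i, hiL⟩ := rfl
      rw [h2, Fin.snoc_castSucc]
    rw [this]

lemma pcnt_snoc_last {s : ℕ} (Q : Fin s → Fin k) (j j' : Fin k) :
    pcnt k (Fin.snoc Q j) j' (s+1) = pcnt k Q j' s + (if j = j' then 1 else 0) := by
  rw [pcnt_succ, pcnt_snoc_of_le k Q j j' s le_rfl]
  congr 1
  rw [dif_pos (Nat.lt_succ_self s)]
  have : (⟨s, Nat.lt_succ_self s⟩ : Fin (s+1)) = Fin.last s := rfl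
  rw [this, Fin.snoc_last]

lemma pHt_zero {L : ℕ} (Q : Fin L → Fin k) : pHt k Q 0 = 0 := by
  simp [pHt, pcnt_zero]

lemma pHt_step {L : ℕ} (Q : Fin L → Fin k) (i : ℕ) (h : i < L) :
    pHt k Q (i+1) = pHt k Q i + ((k:ℤ) - 1 - 2*((Q ⟨i,h⟩ : ℕ) : ℤ)) := by
  unfold pHt
  have : ∀ j : Fin k, ((k : ℤ) - 1 - 2*(j : ℕ)) * (pcnt k Q j (i+1) : ℤ)
      = ((k : ℤ) - 1 - 2*(j : ℕ)) * (pcnt k Q j i : ℤ)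
        + (if Q ⟨i,h⟩ = j then ((k : ℤ) - 1 - 2*(j : ℕ)) else 0) := by
    intro j
    rw [pcnt_succ, dif_pos h]
    by_cases hq : Q ⟨i,h⟩ = j
    · rw [if_pos hq, if_pos hq]; push_cast; ring
    · rw [if_neg hq, if_neg hq]; push_cast; ring
  rw [Finset.sum_congr rfl (fun j _ => this j), Finset.sum_add_distrib]
  congr 1
  rw [Finset.sum_ite_eq (Finset.univ) (Q ⟨i,h⟩) (fun j => ((k : ℤ) - 1 - 2*(j : ℕ)))]
  simp

lemma pHt_snoc_of_le {s : ℕ} (Q : Fin s → Fin k) (j : Fin k) {i : ℕ} (hi : i ≤ s) :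
    pHt k (Fin.snoc Q j) i = pHt k Q i := by
  unfold pHt
  exact Finset.sum_congr rfl (fun j' _ => by rw [pcnt_snoc_of_le k Q j j' i hi])


lemma abel_sum (c x : ℕ → ℤ) (n : ℕ) :
    ∑ j ∈ Finset.range n, c j * x j
      = (∑ l ∈ Finset.range n, (∑ j ∈ Finset.range (l+1), c j) * (x l - x (l+1)))
        + (∑ j ∈ Finset.range n, c j) * x n := by
  induction n with
  | zero => simp
  | succ n ih =>
    rw [Finset.sum_range_succ (fun j => c j * x j),
        Finset.sum_range_succ (fun l => (∑ j ∈ Finset.range (l+1), c j) * (x l - x (l+1))),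
        Finset.sum_range_succ c, ih]
    ring

lemma coeff_sum (l : ℕ) :
    ∑ j ∈ Finset.range l, ((k:ℤ) - 1 - 2*j) = (l:ℤ) * ((k:ℤ) - l) := by
  induction l with
  | zero => simp
  | succ l ih =>
    rw [Finset.sum_range_succ, ih]
    push_cast
    ring

lemma fin1 (l : Fin (k-1)) : (l : ℕ) < k := by have := l.isLt; omega
lemma fin2 (l : Fin (k-1)) : (l : ℕ) + 1 < k := by have := l.isLt; omega

def htN (D : Fin (k-1) → ℕ) : ℤ :=
  ∑ l : Fin (k-1), (((l:ℕ):ℤ)+1) * ((k:ℤ) - (((l:ℕ):ℤ)+1)) * (D l : ℤ)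

def StEqN {s : ℕ} (Q : Fin s → Fin k) (D : Fin (k-1) → ℕ) : Prop :=
  ∀ l : Fin (k-1), pcnt k Q ⟨(l:ℕ), fin1 k l⟩ s = pcnt k Q ⟨(l:ℕ)+1, fin2 k l⟩ s + D l

lemma pHt_eq (hk : 1 ≤ k) {s : ℕ} (Q : Fin s → Fin k) (D : Fin (k-1) → ℕ)
    (hD : StEqN k Q D) : pHt k Q s = htN k D := by
  set x : ℕ → ℤ := fun j => if h : j < k then (pcnt k Q ⟨j,h⟩ s : ℤ) else 0 with hx
  have h1 : pHt k Q s = ∑ j ∈ Finset.range k, ((k:ℤ) - 1 - 2*(j:ℤ)) * x j := by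
    rw [← Fin.sum_univ_eq_sum_range (fun j => ((k:ℤ) - 1 - 2*(j:ℤ)) * x j) k]
    unfold pHt
    apply Finset.sum_congr rfl
    intro j _
    simp only [hx]
    rw [dif_pos j.isLt]
  rw [h1, abel_sum]
  have hSk : (∑ j ∈ Finset.range k, ((k:ℤ) - 1 - 2*(j:ℤ))) = 0 := by
    rw [coeff_sum]; ring
  rw [hSk, zero_mul, add_zero]
  have hk1 : k - 1 + 1 = k := by omega
  have hsplit : ∑ l ∈ Finset.range k,
      (∑ j ∈ Finset.range (l+1), ((k:ℤ) - 1 - 2*(j:ℤ))) * (x l - x (l+1))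
      = ∑ l ∈ Finset.range (k-1),
      (∑ j ∈ Finset.range (l+1), ((k:ℤ) - 1 - 2*(j:ℤ))) * (x l - x (l+1)) := by
    have h2 := Finset.sum_range_succ
      (fun l => (∑ j ∈ Finset.range (l+1), ((k:ℤ) - 1 - 2*(j:ℤ))) * (x l - x (l+1))) (k-1)
    rw [hk1] at h2
    rw [h2, hSk, zero_mul, add_zero]
  rw [hsplit]
  unfold htN
  rw [← Fin.sum_univ_eq_sum_range
    (fun l => (∑ j ∈ Finset.range (l+1), ((k:ℤ) - 1 - 2*(j:ℤ))) * (x l - x (l+1))) (k-1)]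
  apply Finset.sum_congr rfl
  intro l _
  show (∑ j ∈ Finset.range ((l:ℕ)+1), ((k:ℤ) - 1 - 2*(j:ℤ))) * (x (l:ℕ) - x ((l:ℕ)+1)) = _
  have hxl : x (l : ℕ) = (pcnt k Q ⟨(l:ℕ), fin1 k l⟩ s : ℤ) := by
    simp only [hx]; rw [dif_pos (fin1 k l)]
  have hxl1 : x ((l : ℕ)+1) = (pcnt k Q ⟨(l:ℕ)+1, fin2 k l⟩ s : ℤ) := by
    simp only [hx]; rw [dif_pos (fin2 k l)]
  have hdiff : x (l : ℕ) - x ((l:ℕ)+1) = (D l : ℤ) := by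
    rw [hxl, hxl1, hD l]; push_cast; ring
  rw [hdiff, coeff_sum]
  push_cast
  ring

lemma D_le_of_htN_le {Hn : ℕ} (D : Fin (k-1) → ℕ) (hH : htN k D ≤ (Hn:ℤ)) (l : Fin (k-1)) :
    D l ≤ Hn := by
  have hterm : ∀ l' : Fin (k-1),
      (0:ℤ) ≤ (((l':ℕ):ℤ)+1) * ((k:ℤ) - (((l':ℕ):ℤ)+1)) * (D l' : ℤ) := by
    intro l'
    have h2 : ((l':ℕ):ℤ) + 1 + 1 ≤ (k:ℤ) := by exact_mod_cast fin2 k l'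
    exact mul_nonneg (mul_nonneg (by omega) (by omega)) (Int.ofNat_nonneg _)
  have hone : (1:ℤ) ≤ (((l:ℕ):ℤ)+1) * ((k:ℤ) - (((l:ℕ):ℤ)+1)) := by
    have h1 : (1:ℤ) ≤ ((l:ℕ):ℤ)+1 := by omega
    have h2 : ((l:ℕ):ℤ) + 1 + 1 ≤ (k:ℤ) := by exact_mod_cast fin2 k l
    nlinarith
  have hsingle : (((l:ℕ):ℤ)+1) * ((k:ℤ) - (((l:ℕ):ℤ)+1)) * (D l : ℤ) ≤ htN k D := by
    unfold htN
    exact Finset.single_le_sum (fun i _ => hterm i) (Finset.mem_univ l)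
  have hDl : (D l : ℤ) ≤ (((l:ℕ):ℤ)+1) * ((k:ℤ) - (((l:ℕ):ℤ)+1)) * (D l : ℤ) := by
    nlinarith [Int.ofNat_nonneg (D l)]
  have : (D l : ℤ) ≤ (Hn : ℤ) := le_trans hDl (le_trans hsingle hH)
  exact_mod_cast this


variable (Hn : ℕ) (b c : ℕ → ℤ)

abbrev State (k Hn : ℕ) := Fin (k-1) → Fin (Hn+1)

def toD {k Hn : ℕ} (d : State k Hn) : Fin (k-1) → ℕ := fun l => (d l : ℕ)

def Leg {s : ℕ} (Q : Fin s → Fin k) : Prop :=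
  (∀ i ≤ s, ∀ j j' : Fin k, j ≤ j' → pcnt k Q j' i ≤ pcnt k Q j i) ∧
  (∀ i ≤ s, pHt k Q i ≤ (Hn:ℤ))

noncomputable def pwt {s : ℕ} (Q : Fin s → Fin k) : ℤ :=
  ∏ t : Fin s, if (Q t : ℕ) < k/2 then b (pHt k Q (t:ℕ)).toNat
    else c (pHt k Q ((t:ℕ)+1)).toNat

noncomputable def wt (d : State k Hn) (j : Fin k) : ℤ :=
  if (j:ℕ) < k/2 then b (htN k (toD d)).toNat
  else c (htN k (toD d) + ((k:ℤ) - 1 - 2*((j:ℕ):ℤ))).toNat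

def Rel (d : State k Hn) (j : Fin k) (d' : State k Hn) : Prop :=
  (∀ l : Fin (k-1), toD d' l + (if (l:ℕ)+1 = (j:ℕ) then 1 else 0)
     = toD d l + (if (l:ℕ) = (j:ℕ) then 1 else 0)) ∧
  htN k (toD d') ≤ (Hn:ℤ)

noncomputable def A : ℕ → State k Hn → ℤ
  | 0 => fun d => if ∀ l, toD d l = 0 then 1 else 0
  | (s+1) => fun d' => ∑ d : State k Hn, ∑ j : Fin k,
      if Rel k Hn d j d' then A s d * wt k Hn b c d j else 0

lemma chain_le {f : Fin k → ℕ}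
    (h : ∀ l : Fin (k-1), f ⟨(l:ℕ)+1, fin2 k l⟩ ≤ f ⟨(l:ℕ), fin1 k l⟩) :
    ∀ j j' : Fin k, j ≤ j' → f j' ≤ f j := by
  have key : ∀ (bv : ℕ) (hb : bv < k) (a : ℕ) (ha : a < k), a ≤ bv →
      f ⟨bv, hb⟩ ≤ f ⟨a, ha⟩ := by
    intro bv
    induction bv with
    | zero =>
      intro hb a ha hab
      have : a = 0 := Nat.le_zero.mp hab
      subst this
      exact le_rfl
    | succ bv ihb =>
      intro hb a ha hab
      rcases Nat.lt_succ_iff_lt_or_eq.mp (Nat.lt_succ_of_le hab) with h1 | h1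
      · have hl : bv < k - 1 := by omega
        have step := h ⟨bv, hl⟩
        exact le_trans step (ihb (by omega) a ha (by omega))
      · subst h1
        exact le_rfl
  intro j j' hjj
  have := key (j':ℕ) j'.isLt (j:ℕ) j.isLt hjj
  simpa using this

lemma steq_snoc_iff {s : ℕ} (Q : Fin s → Fin k) (j : Fin k)
    (Dq D' : Fin (k-1) → ℕ) (hQ : StEqN k Q Dq) :
    StEqN k (Fin.snoc Q j) D' ↔
      ∀ l : Fin (k-1), D' l + (if (l:ℕ)+1 = (j:ℕ) then 1 else 0)
        = Dq l + (if (l:ℕ) = (j:ℕ) then 1 else 0) := by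
  unfold StEqN
  apply forall_congr'
  intro l
  rw [pcnt_snoc_last, pcnt_snoc_last]
  have hQl := hQ l
  have e1 : (j = (⟨(l:ℕ), fin1 k l⟩ : Fin k)) ↔ ((l:ℕ) = (j:ℕ)) := by
    rw [Fin.ext_iff]; exact eq_comm
  have e2 : (j = (⟨(l:ℕ)+1, fin2 k l⟩ : Fin k)) ↔ ((l:ℕ)+1 = (j:ℕ)) := by
    rw [Fin.ext_iff]; exact eq_comm
  by_cases h1 : (l:ℕ) = (j:ℕ)
  · rw [if_pos (e1.mpr h1), if_pos h1]
    by_cases h2 : (l:ℕ)+1 = (j:ℕ)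
    · omega
    · rw [if_neg (fun hh => h2 (e2.mp hh)), if_neg h2]
      omega
  · rw [if_neg (fun hh => h1 (e1.mp hh)), if_neg h1]
    by_cases h2 : (l:ℕ)+1 = (j:ℕ)
    · rw [if_pos (e2.mpr h2), if_pos h2]
      omega
    · rw [if_neg (fun hh => h2 (e2.mp hh)), if_neg h2]
      omega

lemma leg_restrict {s : ℕ} (Q : Fin s → Fin k) (j : Fin k)
    (h : Leg k Hn (Fin.snoc Q j)) : Leg k Hn Q := by
  constructor
  · intro i hi j1 j2 h12
    have := h.1 i (le_trans hi (Nat.le_succ s)) j1 j2 h12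
    rwa [pcnt_snoc_of_le k Q j j2 i hi, pcnt_snoc_of_le k Q j j1 i hi] at this
  · intro i hi
    have := h.2 i (le_trans hi (Nat.le_succ s))
    rwa [pHt_snoc_of_le k Q j hi] at this

lemma leg_snoc (hk : 1 ≤ k) {s : ℕ} (Q : Fin s → Fin k) (j : Fin k)
    (hQ : Leg k Hn Q) (D' : Fin (k-1) → ℕ)
    (hst : StEqN k (Fin.snoc Q j) D') (hht : htN k D' ≤ (Hn:ℤ)) :
    Leg k Hn (Fin.snoc Q j) := by
  constructor
  · intro i hi j1 j2 h12
    rcases Nat.lt_succ_iff_lt_or_eq.mp (Nat.lt_succ_of_le hi) with h1 | h1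
    · have hi' : i ≤ s := by omega
      rw [pcnt_snoc_of_le k Q j j2 i hi', pcnt_snoc_of_le k Q j j1 i hi']
      exact hQ.1 i hi' j1 j2 h12
    · subst h1
      exact chain_le k (f := fun jj => pcnt k (Fin.snoc Q j) jj (s+1))
        (fun l => by have := hst l; omega) j1 j2 h12
  · intro i hi
    rcases Nat.lt_succ_iff_lt_or_eq.mp (Nat.lt_succ_of_le hi) with h1 | h1
    · have hi' : i ≤ s := by omega
      rw [pHt_snoc_of_le k Q j hi']
      exact hQ.2 i hi'
    · subst h1
      rw [pHt_eq k hk (Fin.snoc Q j) D' hst]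
      exact hht

lemma pwt_snoc (hk : 1 ≤ k) {s : ℕ} (Q : Fin s → Fin k) (j : Fin k)
    (d : State k Hn) (hd : StEqN k Q (toD d)) :
    pwt k b c (Fin.snoc Q j) = pwt k b c Q * wt k Hn b c d j := by
  unfold pwt
  rw [Fin.prod_univ_castSucc]
  congr 1
  · apply Finset.prod_congr rfl
    intro t _
    have hc : ((Fin.castSucc t : Fin (s+1)) : ℕ) = (t:ℕ) := rfl
    rw [Fin.snoc_castSucc, hc,
        pHt_snoc_of_le k Q j (le_of_lt t.isLt),
        pHt_snoc_of_le k Q j (Nat.succ_le_of_lt t.isLt)]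
  · rw [Fin.snoc_last]
    have hlast : ((Fin.last s : Fin (s+1)) : ℕ) = s := rfl
    rw [hlast]
    have h1 : pHt k (Fin.snoc Q j) s = htN k (toD d) := by
      rw [pHt_snoc_of_le k Q j le_rfl, pHt_eq k hk Q (toD d) hd]
    have hQs : (Fin.snoc Q j : Fin (s+1) → Fin k) ⟨s, Nat.lt_succ_self s⟩ = j := by
      rw [show (⟨s, Nat.lt_succ_self s⟩ : Fin (s+1)) = Fin.last s from rfl, Fin.snoc_last]
    have h2 : pHt k (Fin.snoc Q j) (s+1)
        = htN k (toD d) + ((k:ℤ) - 1 - 2*((j:ℕ):ℤ)) := by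
      rw [pHt_step k (Fin.snoc Q j) s (Nat.lt_succ_self s), h1, hQs]
    rw [h1, h2]
    rfl

lemma key (hk : 2 ≤ k) {s : ℕ} (Q : Fin s → Fin k) (j : Fin k) (d' : State k Hn) :
    (∑ d : State k Hn,
      if (Leg k Hn Q ∧ StEqN k Q (toD d)) ∧ Rel k Hn d j d'
      then pwt k b c Q * wt k Hn b c d j else 0)
    = if Leg k Hn (Fin.snoc Q j) ∧ StEqN k (Fin.snoc Q j) (toD d')
      then pwt k b c (Fin.snoc Q j) else 0 := by
  have hk1 : 1 ≤ k := by omega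
  by_cases h : Leg k Hn (Fin.snoc Q j) ∧ StEqN k (Fin.snoc Q j) (toD d')
  · rw [if_pos h]
    have hLQ : Leg k Hn Q := leg_restrict k Hn Q j h.1
    have hmono : ∀ l : Fin (k-1),
        pcnt k Q ⟨(l:ℕ)+1, fin2 k l⟩ s ≤ pcnt k Q ⟨(l:ℕ), fin1 k l⟩ s := by
      intro l
      exact hLQ.1 s le_rfl _ _ (by rw [Fin.mk_le_mk]; omega)
    set Dn : Fin (k-1) → ℕ :=
      fun l => pcnt k Q ⟨(l:ℕ), fin1 k l⟩ s - pcnt k Q ⟨(l:ℕ)+1, fin2 k l⟩ s with hDn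
    have hst : StEqN k Q Dn := by
      intro l
      simp only [hDn]
      have := hmono l
      omega
    have hht : htN k Dn ≤ (Hn:ℤ) := by
      rw [← pHt_eq k hk1 Q Dn hst]
      exact hLQ.2 s le_rfl
    have hbd : ∀ l, Dn l ≤ Hn := D_le_of_htN_le k Dn hht
    set d : State k Hn := fun l => ⟨Dn l, Nat.lt_succ_of_le (hbd l)⟩ with hdd
    have htoD : toD d = Dn := rfl
    have hstd : StEqN k Q (toD d) := by rw [htoD]; exact hst
    have hrel : Rel k Hn d j d' := by
      constructor
      · intro l
        have := (steq_snoc_iff k Q j (toD d) (toD d') hstd).mp h.2 l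
        omega
      · rw [← pHt_eq k hk1 (Fin.snoc Q j) (toD d') h.2]
        exact h.1.2 (s+1) le_rfl
    rw [Finset.sum_eq_single d]
    · rw [if_pos ⟨⟨hLQ, hstd⟩, hrel⟩]
      exact (pwt_snoc k Hn b c hk1 Q j d hstd).symm
    · intro d2 _ hne
      by_cases h2 : (Leg k Hn Q ∧ StEqN k Q (toD d2)) ∧ Rel k Hn d2 j d'
      · exfalso
        apply hne
        funext l
        have e1 := h2.1.2 l
        have e2 := hstd l
        exact Fin.ext (by omega : toD d2 l = toD d l)
      · rw [if_neg h2]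
    · intro hmem
      exact absurd (Finset.mem_univ d) hmem
  · rw [if_neg h]
    apply Finset.sum_eq_zero
    intro d _
    by_cases h2 : (Leg k Hn Q ∧ StEqN k Q (toD d)) ∧ Rel k Hn d j d'
    · exfalso
      apply h
      have hst' : StEqN k (Fin.snoc Q j) (toD d') :=
        (steq_snoc_iff k Q j (toD d) (toD d') h2.1.2).mpr (fun l => h2.2.1 l)
      exact ⟨leg_snoc k Hn hk1 Q j h2.1.1 (toD d') hst' h2.2.2, hst'⟩
    · rw [if_neg h2]

lemma main (hk : 2 ≤ k) : ∀ (s : ℕ) (d' : State k Hn),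
    A k Hn b c s d' = ∑ Q : Fin s → Fin k,
      if Leg k Hn Q ∧ StEqN k Q (toD d') then pwt k b c Q else 0 := by
  intro s
  induction s with
  | zero =>
    intro d'
    rw [show (A k Hn b c 0 d') = (if ∀ l, toD d' l = 0 then 1 else 0) from rfl]
    rw [Finset.univ_unique, Finset.sum_singleton]
    have hleg : Leg k Hn (default : Fin 0 → Fin k) := by
      constructor
      · intro i hi j1 j2 h12
        have : i = 0 := by omega
        subst this
        rw [pcnt_zero, pcnt_zero]
      · intro i hi
        have : i = 0 := by omega
        subst this
        rw [pHt_zero]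
        exact_mod_cast Nat.zero_le Hn
    have hpwt : pwt k b c (default : Fin 0 → Fin k) = 1 := by
      unfold pwt
      exact Finset.prod_of_isEmpty _
    have hSt : StEqN k (default : Fin 0 → Fin k) (toD d') ↔ ∀ l, toD d' l = 0 := by
      unfold StEqN
      apply forall_congr'
      intro l
      rw [pcnt_zero, pcnt_zero]
      omega
    by_cases hc : ∀ l, toD d' l = 0
    · rw [if_pos hc, if_pos ⟨hleg, hSt.mpr hc⟩, hpwt]
    · rw [if_neg hc, if_neg (fun hh => hc (hSt.mp hh.2))]
  | succ s ih =>
    intro d'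
    rw [show A k Hn b c (s+1) d' = ∑ d : State k Hn, ∑ j : Fin k,
        (if Rel k Hn d j d' then A k Hn b c s d * wt k Hn b c d j else 0) from rfl]
    have step1 : ∀ d : State k Hn, ∀ j : Fin k,
        (if Rel k Hn d j d' then A k Hn b c s d * wt k Hn b c d j else 0)
        = ∑ Q : Fin s → Fin k,
            (if (Leg k Hn Q ∧ StEqN k Q (toD d)) ∧ Rel k Hn d j d'
            then pwt k b c Q * wt k Hn b c d j else 0) := by
      intro d j
      by_cases hr : Rel k Hn d j d'
      · rw [if_pos hr, ih d, Finset.sum_mul]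
        apply Finset.sum_congr rfl
        intro Q _
        by_cases hq : Leg k Hn Q ∧ StEqN k Q (toD d)
        · rw [if_pos hq, if_pos ⟨hq, hr⟩]
        · rw [if_neg hq, if_neg (fun hh => hq hh.1), zero_mul]
      · rw [if_neg hr]
        symm
        apply Finset.sum_eq_zero
        intro Q _
        rw [if_neg (fun hh => hr hh.2)]
    rw [Finset.sum_congr rfl (fun d _ => Finset.sum_congr rfl (fun j _ => step1 d j))]
    rw [Finset.sum_comm]
    have swap2 : ∀ j : Fin k,
        (∑ d : State k Hn, ∑ Q : Fin s → Fin k,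
          (if (Leg k Hn Q ∧ StEqN k Q (toD d)) ∧ Rel k Hn d j d'
            then pwt k b c Q * wt k Hn b c d j else 0))
        = ∑ Q : Fin s → Fin k,
            (if Leg k Hn (Fin.snoc Q j) ∧ StEqN k (Fin.snoc Q j) (toD d')
              then pwt k b c (Fin.snoc Q j) else 0) := by
      intro j
      rw [Finset.sum_comm]
      exact Finset.sum_congr rfl (fun Q _ => key k Hn b c hk Q j d')
    rw [Finset.sum_congr rfl (fun j _ => swap2 j)]
    have hequiv : (∑ p : Fin k × (Fin s → Fin k),
        (if Leg k Hn (Fin.snoc p.2 p.1) ∧ StEqN k (Fin.snoc p.2 p.1) (toD d')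
          then pwt k b c (Fin.snoc p.2 p.1) else 0))
        = ∑ Q : Fin (s+1) → Fin k,
            (if Leg k Hn Q ∧ StEqN k Q (toD d') then pwt k b c Q else 0) :=
      Fintype.sum_equiv (Fin.snocEquiv (fun _ => Fin k)) _ _ (fun p => rfl)
    rw [← hequiv, Fintype.sum_prod_type]

lemma chain_eq {f : Fin k → ℕ}
    (h : ∀ l : Fin (k-1), f ⟨(l:ℕ)+1, fin2 k l⟩ = f ⟨(l:ℕ), fin1 k l⟩) :
    ∀ j j' : Fin k, f j = f j' := by
  have key : ∀ (bv : ℕ) (hb : bv < k), f ⟨bv, hb⟩ = f ⟨0, by omega⟩ := by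
    intro bv
    induction bv with
    | zero => intro hb; rfl
    | succ bv ihb =>
      intro hb
      have hl : bv < k - 1 := by omega
      have step := h ⟨bv, hl⟩
      exact step.trans (ihb (by omega))
  intro j j'
  have h1 := key (j:ℕ) j.isLt
  have h2 := key (j':ℕ) j'.isLt
  simp only [Fin.eta] at h1 h2
  rw [h1, h2]

lemma pcnt_total {L : ℕ} (Q : Fin L → Fin k) :
    ∑ j : Fin k, pcnt k Q j L = L := by
  unfold pcnt
  have hfe : ∀ j : Fin k,
      (Finset.univ.filter (fun t : Fin L => (t:ℕ) < L ∧ Q t = j))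
        = (Finset.univ.filter (fun t : Fin L => Q t = j)) := by
    intro j
    apply Finset.filter_congr
    intro t _
    simp [t.isLt]
  rw [Finset.sum_congr rfl (fun j _ => by rw [hfe j])]
  have := Finset.card_eq_sum_card_fiberwise
    (fun (t : Fin L) (_ : t ∈ Finset.univ) => Finset.mem_univ (Q t))
  rw [← this, Finset.card_univ, Fintype.card_fin]

noncomputable def Phi (m : ℕ) : ((State k Hn) → ZMod m) → ((State k Hn) → ZMod m) :=
  fun v d' => ∑ d : State k Hn, ∑ j : Fin k,
    if Rel k Hn d j d' then v d * ((wt k Hn b c d j : ℤ) : ZMod m) else 0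

lemma A_cast (m : ℕ) (s : ℕ) :
    (fun d' => ((A k Hn b c s d' : ℤ) : ZMod m))
      = (Phi k Hn b c m)^[s] (fun d' => ((A k Hn b c 0 d' : ℤ) : ZMod m)) := by
  induction s with
  | zero => simp
  | succ s ih =>
    rw [Function.iterate_succ_apply', ← ih]
    funext d'
    rw [show A k Hn b c (s+1) d' = ∑ d : State k Hn, ∑ j : Fin k,
        (if Rel k Hn d j d' then A k Hn b c s d * wt k Hn b c d j else 0) from rfl]
    unfold Phi
    push_cast
    apply Finset.sum_congr rfl
    intro d _
    apply Finset.sum_congr rfl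
    intro j _
    split_ifs with hr
    · rfl
    · rfl


lemma ptHt_pHt (n : ℕ) (P : Fin (k*n) → Fin k) (i : ℕ) :
    ptHt k n P i = pHt k P i := rfl

lemma sswt_pwt (n : ℕ) (P : Fin (k*n) → Fin k) :
    sswt k n b c P = pwt k b c P := rfl

lemma high_div (n : ℕ) (hk : 2 ≤ k) (u : ℕ) (hu : 1 ≤ u) (m : ℕ)
    (hb : ∀ j < k, (m:ℤ) ∣ b (u + j)) (P : Fin (k*n) → Fin k)
    (hhigh : ¬ HeightLE k n P ((u:ℤ) + (k:ℤ) - 2)) :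
    (m:ℤ) ∣ sswt k n b c P := by
  unfold HeightLE at hhigh
  push_neg at hhigh
  obtain ⟨i1, hi1, hgt⟩ := hhigh
  have hex : ∃ i, i ≤ k*n ∧ (u:ℤ) + (k:ℤ) - 2 < ptHt k n P i := ⟨i1, hi1, hgt⟩
  set i0 := Nat.find hex with hi0
  obtain ⟨hle0, hgt0⟩ := Nat.find_spec hex
  rw [← hi0] at hle0 hgt0
  have hpt0 : ptHt k n P 0 = 0 := pHt_zero k P
  have h0ne : i0 ≠ 0 := by
    intro h0
    rw [h0, hpt0] at hgt0
    omega
  set t := i0 - 1 with hts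
  have htlt : t < k*n := by omega
  have hmin := Nat.find_min hex (show t < i0 by omega)
  have hprev : ptHt k n P t ≤ (u:ℤ) + (k:ℤ) - 2 := by
    by_contra hcc
    push_neg at hcc
    exact hmin ⟨by omega, hcc⟩
  have hcur : (u:ℤ) + (k:ℤ) - 2 < ptHt k n P (t+1) := by
    have h1 : t + 1 = i0 := by omega
    rw [h1]
    exact hgt0
  have hstep : ptHt k n P (t+1)
      = ptHt k n P t + ((k:ℤ) - 1 - 2*(((P ⟨t, htlt⟩ : Fin k) : ℕ) : ℤ)) :=
    pHt_step k P t htlt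
  set j : Fin k := P ⟨t, htlt⟩ with hj
  have hcoeff_pos : (1:ℤ) ≤ (k:ℤ) - 1 - 2*(((j : Fin k) : ℕ) : ℤ) := by omega
  have hjk2 : ((j : Fin k) : ℕ) < k/2 := by
    have h2 : (((j : Fin k) : ℕ)+1)*2 ≤ k := by omega
    have h3 := (Nat.le_div_iff_mul_le (show 0 < 2 by norm_num)).mpr h2
    omega
  have hlow : (u:ℤ) ≤ ptHt k n P t := by omega
  set hgtn : ℕ := (ptHt k n P t).toNat with hhdef
  have hh : (hgtn : ℤ) = ptHt k n P t := Int.toNat_of_nonneg (by omega)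
  have hdvd1 : (m:ℤ) ∣ b hgtn := by
    have hb2 := hb (hgtn - u) (by omega)
    rwa [show u + (hgtn - u) = hgtn by omega] at hb2
  apply dvd_trans hdvd1
  have hfac : (fun t' : Fin (k*n) =>
      if ((P t' : Fin k) : ℕ) < k/2 then b (ptHt k n P (t' : ℕ)).toNat
      else c (ptHt k n P ((t' : ℕ)+1)).toNat) ⟨t, htlt⟩ = b hgtn := by
    dsimp only
    rw [← hj, if_pos hjk2]
  rw [← hfac]
  exact Finset.dvd_prod_of_mem _ (Finset.mem_univ (⟨t, htlt⟩ : Fin (k*n)))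

lemma cond_iff (n : ℕ) (hk : 2 ≤ k) (P : Fin (k*n) → Fin k) :
    (IsBBP k n P ∧ HeightLE k n P ((Hn:ℕ):ℤ)) ↔
    (Leg k Hn (s := k*n) P ∧ StEqN k (s := k*n) P (fun _ => 0)) := by
  constructor
  · rintro ⟨hbbp, hle⟩
    refine ⟨⟨hbbp.2, hle⟩, ?_⟩
    intro l
    show pcnt k P ⟨(l:ℕ), fin1 k l⟩ (k*n) = pcnt k P ⟨(l:ℕ)+1, fin2 k l⟩ (k*n) + 0
    have h1 : pcnt k P ⟨(l:ℕ), fin1 k l⟩ (k*n) = n := hbbp.1 _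
    have h2 : pcnt k P ⟨(l:ℕ)+1, fin2 k l⟩ (k*n) = n := hbbp.1 _
    omega
  · rintro ⟨hleg, hst⟩
    have heq : ∀ j j' : Fin k, pcnt k P j (k*n) = pcnt k P j' (k*n) :=
      chain_eq k (f := fun j => pcnt k P j (k*n))
        (fun l => by
          have h9 : pcnt k P ⟨(l:ℕ), fin1 k l⟩ (k*n)
              = pcnt k P ⟨(l:ℕ)+1, fin2 k l⟩ (k*n) + 0 := hst l
          omega)
    have htot := pcnt_total k P
    have hall : ∀ jj : Fin k, pcnt k P jj (k*n) = n := by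
      intro jj
      have hsum : ∑ j' : Fin k, pcnt k P j' (k*n) = k * (pcnt k P jj (k*n)) := by
        rw [Finset.sum_congr rfl (fun j' _ => heq j' jj), Finset.sum_const,
            Finset.card_univ, Fintype.card_fin, smul_eq_mul]
      rw [htot] at hsum
      exact (Nat.eq_of_mul_eq_mul_left (by omega) hsum.symm)
    exact ⟨⟨hall, hleg.1⟩, hleg.2⟩

end SS14

theorem stmt14 (m k : ℕ) (hm : 0 < m) (hk : 2 ≤ k) (b c : ℕ → ℤ)
    (hdiv : ∃ u : ℕ, 0 < u ∧ ∀ j < k, (m : ℤ) ∣ b (u + j)) :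
    ∃ N p : ℕ, 0 < p ∧ ∀ n ≥ N,
      SSWCN k b c (n + p) % (m : ℤ) = SSWCN k b c n % (m : ℤ) := by
  classical
  obtain ⟨u, hu, hb⟩ := hdiv
  set Hn : ℕ := u + k - 2 with hHn
  haveI : NeZero m := ⟨hm.ne'⟩
  set zeroState : SS14.State k Hn := fun _ => (⟨0, Nat.succ_pos Hn⟩ : Fin (Hn+1))
    with hzs
  set g0 : SS14.State k Hn → ZMod m :=
    fun d' => ((SS14.A k Hn b c 0 d' : ℤ) : ZMod m) with hg0
  set V : ℕ → SS14.State k Hn → ZMod m :=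
    fun s => (SS14.Phi k Hn b c m)^[s] g0 with hV
  obtain ⟨a0, b0, hne, heq⟩ := Finite.exists_ne_map_eq_of_infinite V
  obtain ⟨N0, p0, hp0, hVp⟩ : ∃ N0 p0, 0 < p0 ∧ V (N0 + p0) = V N0 := by
    rcases (Ne.lt_or_gt hne) with hlt | hlt
    · exact ⟨a0, b0 - a0, by omega,
        by rw [show a0 + (b0 - a0) = b0 by omega]; exact heq.symm⟩
    · exact ⟨b0, a0 - b0, by omega,
        by rw [show b0 + (a0 - b0) = a0 by omega]; exact heq⟩
  have hVshift : ∀ s, N0 ≤ s → V (s + p0) = V s := by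
    intro s hs
    have h0 : s = (s - N0) + N0 := by omega
    rw [h0]
    have h1 : (s - N0) + N0 + p0 = (s - N0) + (N0 + p0) := by omega
    rw [h1]
    simp only [hV]
    have h2 : (SS14.Phi k Hn b c m)^[N0 + p0] g0 = (SS14.Phi k Hn b c m)^[N0] g0 := hVp
    rw [Function.iterate_add_apply _ (s - N0) (N0 + p0) g0,
        Function.iterate_add_apply _ (s - N0) N0 g0, h2]
  have hVmul : ∀ r s, N0 ≤ s → V (s + r * p0) = V s := by
    intro r
    induction r with
    | zero => intro s _; simp
    | succ r ihr =>
      intro s hs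
      have h1 : s + (r+1) * p0 = (s + r * p0) + p0 := by ring
      rw [h1, hVshift _ (by omega), ihr s hs]
  refine ⟨N0, p0, hp0, ?_⟩
  intro n hn
  have hcast : ((Hn:ℕ):ℤ) = (u:ℤ) + (k:ℤ) - 2 := by omega
  have hdiff : ∀ n' : ℕ,
      (m:ℤ) ∣ SSWCN k b c n' - SS14.A k Hn b c (k*n') zeroState := by
    intro n'
    have hmain := SS14.main k Hn b c hk (k*n') zeroState
    rw [SSWCN, hmain, ← Finset.sum_sub_distrib]
    apply Finset.dvd_sum
    intro P _
    by_cases h1 : IsBBP k n' P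
    · by_cases h2 : HeightLE k n' P ((Hn:ℕ):ℤ)
      · have hc : SS14.Leg k Hn P ∧ SS14.StEqN k P (SS14.toD zeroState) :=
          (SS14.cond_iff k Hn n' hk P).mp ⟨h1, h2⟩
        rw [if_pos h1, if_pos hc, SS14.sswt_pwt k b c n' P, sub_self]
        exact dvd_zero _
      · have hnc : ¬ (SS14.Leg k Hn P ∧ SS14.StEqN k P (SS14.toD zeroState)) := by
          intro hc
          exact h2 (((SS14.cond_iff k Hn n' hk P).mpr hc).2)
        rw [if_pos h1, if_neg hnc, sub_zero]
        apply SS14.high_div k b c n' hk u hu m hb P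
        rw [← hcast]
        exact h2
    · have hnc : ¬ (SS14.Leg k Hn P ∧ SS14.StEqN k P (SS14.toD zeroState)) := by
        intro hc
        exact h1 (((SS14.cond_iff k Hn n' hk P).mpr hc).1)
      rw [if_neg h1, if_neg hnc, sub_zero]
      exact dvd_zero _
  have hAcast : ∀ s, ((SS14.A k Hn b c s zeroState : ℤ) : ZMod m) = V s zeroState := by
    intro s
    have h3 := SS14.A_cast k Hn b c m s
    rw [hV]
    exact congrFun h3 zeroState
  have hknN : N0 ≤ k * n := by
    have h4 : 1 * n ≤ k * n := Nat.mul_le_mul_right n (by omega)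
    omega
  have hVeq : V (k*(n+p0)) zeroState = V (k*n) zeroState := by
    have h5 : k*(n+p0) = k*n + k*p0 := by ring
    rw [h5]
    exact congrFun (hVmul k (k*n) hknN) zeroState
  have hTmod : SS14.A k Hn b c (k*(n+p0)) zeroState
      ≡ SS14.A k Hn b c (k*n) zeroState [ZMOD m] := by
    rw [← ZMod.intCast_eq_intCast_iff]
    rw [hAcast, hAcast, hVeq]
  have hm1 : SSWCN k b c (n+p0) ≡ SS14.A k Hn b c (k*(n+p0)) zeroState [ZMOD m] :=
    (Int.modEq_iff_dvd.mpr (hdiff (n+p0))).symm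
  have hm2 : SS14.A k Hn b c (k*n) zeroState ≡ SSWCN k b c n [ZMOD m] :=
    Int.modEq_iff_dvd.mpr (hdiff n)
  exact hm1.trans (hTmod.trans hm2)
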